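/- Let G be a finite simple connected graph, v ∈ V(G), and let C be a connected component of G \ v. Set E_cs = E(G[C ∪ {v}]). Then the edge-based contraction G ⫽ E_cs equals the node-removal graph G \ C, and the contraction is edge-matching: |E(G) \ E_cs| = |E(G ⫽ E_cs)|. -/

import Mathlib

/-- The simple graph contraction of `G` over the partition of its vertex set given by the
fibers of `f` (cells are fibers): distinct cells are adjacent iff some pair of their members
is adjacent in `G` (self-loops and duplicate edges removed). -/
def contraction {V W : Type*} (G : SimpleGraph V) (f : V → W) : SimpleGraph W where
  Adj i j := i ≠ j ∧ ∃ u v, f u = i ∧ f v = j ∧ G.Adj u v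
  symm := ⟨fun _ _ ⟨hne, u, v, hu, hv, h⟩ => ⟨hne.symm, v, u, hv, hu, h.symm⟩⟩
  loopless := ⟨fun _ ⟨h, _⟩ => h rfl⟩

/-- The edge-based contraction `G ⫽ E_cs`: the contraction of `G` over the partition of
`V(G)` into connected components of the graph `(V(G), E_cs)`. -/
def contractionE {V : Type*} (G : SimpleGraph V) (Ecs : Set (Sym2 V)) :
    SimpleGraph (SimpleGraph.fromEdgeSet Ecs).ConnectedComponent :=
  contraction G (SimpleGraph.fromEdgeSet Ecs).connectedComponentMk

/-- Let `G` be connected, `v` a vertex, and `C` a connected component of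
`G \ v`. With `E_cs = E(G[C ∪ {v}])`, the edge-based contraction `G ⫽ E_cs` equals (is
isomorphic to) the node-removal graph `G \ C`, and the contraction is edge-matching:
`|E(G) \ E_cs| = |E(G ⫽ E_cs)|`. -/
theorem contraction_node_removal_equiv {n : ℕ} (G : SimpleGraph (Fin n)) (hG : G.Connected)
    (v : Fin n) (C : Set (Fin n))
    (hC : ∃ c : (G.induce {u : Fin n | u ≠ v}).ConnectedComponent,
      C = Subtype.val '' c.supp)
    (Ecs : Set (Sym2 (Fin n)))
    (hEcs : Ecs = {e ∈ G.edgeSet | ∀ x ∈ e, x ∈ insert v C}) :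
    Nonempty (contractionE G Ecs ≃g G.induce Cᶜ) ∧
    Nat.card (G.edgeSet \ Ecs : Set (Sym2 (Fin n))) =
      Nat.card (contractionE G Ecs).edgeSet := by
  classical
  obtain ⟨c, hCc⟩ := hC
  subst hEcs
  set Ecs : Set (Sym2 (Fin n)) := {e ∈ G.edgeSet | ∀ x ∈ e, x ∈ insert v C} with hEcs
  set H := SimpleGraph.fromEdgeSet Ecs with hH
  -- membership in C
  have memC : ∀ x : Fin n, x ∈ C ↔ ∃ h : x ≠ v,
      (G.induce {u : Fin n | u ≠ v}).connectedComponentMk ⟨x, h⟩ = c := by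
    intro x
    rw [hCc]
    constructor
    · rintro ⟨⟨y, hy⟩, hmem, rfl⟩
      exact ⟨hy, (SimpleGraph.ConnectedComponent.mem_supp_iff _ _).1 hmem⟩
    · rintro ⟨h, hmk⟩
      exact ⟨⟨x, h⟩, (SimpleGraph.ConnectedComponent.mem_supp_iff _ _).2 hmk, rfl⟩
  have hvC : v ∉ C := by
    intro hv
    obtain ⟨h, _⟩ := (memC v).1 hv
    exact h rfl
  -- Fact A: neighbors of C lie in insert v C
  have factA : ∀ x ∈ C, ∀ y, G.Adj x y → y ∈ insert v C := by
    intro x hx y hxy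
    by_cases hyv : y = v
    · exact hyv ▸ Set.mem_insert _ _
    · right
      obtain ⟨hxv, hmk⟩ := (memC x).1 hx
      refine (memC y).2 ⟨hyv, ?_⟩
      rw [← hmk]
      exact SimpleGraph.ConnectedComponent.sound
        (SimpleGraph.Adj.reachable (by exact hxy.symm : G.Adj ((⟨y, hyv⟩ : {u : Fin n | u ≠ v}) : Fin n) (⟨x, hxv⟩ : {u : Fin n | u ≠ v})))
  -- adjacency in H
  have hHadj : ∀ a b : Fin n, H.Adj a b ↔
      (G.Adj a b ∧ a ∈ insert v C ∧ b ∈ insert v C) := by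
    intro a b
    rw [hH, SimpleGraph.fromEdgeSet_adj]
    constructor
    · rintro ⟨⟨hGe, hmem⟩, hne⟩
      exact ⟨hGe, hmem a (by simp), hmem b (by simp)⟩
    · rintro ⟨hadj, ha, hb⟩
      refine ⟨⟨hadj, ?_⟩, hadj.ne⟩
      intro x hx
      rcases Sym2.mem_iff.1 hx with rfl | rfl
      · exact ha
      · exact hb
  -- every vertex of C reaches v in H
  have reachV : ∀ x ∈ C, H.Reachable x v := by
    have key : ∀ (x y : Fin n) (w : G.Walk x y), x ∈ C → y = v → H.Reachable x v := by
      intro x y w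
      induction w with
      | nil => intro hx hy; exact absurd (hy ▸ hx) hvC
      | @cons a b _ hab w ih =>
        intro ha hy
        have hb : b ∈ insert v C := factA a ha b hab
        have hHab : H.Adj a b := (hHadj a b).2 ⟨hab, Set.mem_insert_of_mem _ ha, hb⟩
        rcases hb with rfl | hb
        · exact hHab.reachable
        · exact hHab.reachable.trans (ih hb hy)
    intro x hx
    obtain ⟨w⟩ := hG.preconnected x v
    exact key x v w hx rfl
  have reachV' : ∀ x ∈ insert v C, H.Reachable x v := by
    rintro x (rfl | hx)
    · exact SimpleGraph.Reachable.refl _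
    · exact reachV x hx
  -- characterization of reachability in H
  have reachIff : ∀ x y : Fin n, H.Reachable x y ↔
      x = y ∨ (x ∈ insert v C ∧ y ∈ insert v C) := by
    intro x y
    constructor
    · rintro ⟨w⟩
      induction w with
      | nil => exact Or.inl rfl
      | @cons a b _ hab w ih =>
        right
        have ha : a ∈ insert v C ∧ b ∈ insert v C := ((hHadj a b).1 hab).2
        rcases ih with rfl | ⟨_, hy⟩
        · exact ⟨ha.1, ha.2⟩
        · exact ⟨ha.1, hy⟩
    · rintro (rfl | ⟨hx, hy⟩)
      · exact SimpleGraph.Reachable.refl _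
      · exact (reachV' x hx).trans (reachV' y hy).symm
  have hvCc : v ∈ Cᶜ := hvC
  -- the collapsing map
    -- f sends everything in `insert v C` to v and is the identity elsewhere
  set f : Fin n → ↥(Cᶜ) := fun x => if h : x ∈ C then ⟨v, hvCc⟩ else ⟨x, h⟩ with hf
  have hf_ins : ∀ x ∈ insert v C, f x = ⟨v, hvCc⟩ := by
    rintro x (rfl | hx)
    · simp only [hf]
      rw [dif_neg hvC]
    · simp only [hf]
      rw [dif_pos hx]
  have hf_not : ∀ (x : Fin n) (h : x ∈ Cᶜ), f x = ⟨x, h⟩ := by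
    intro x h
    simp only [hf]
    rw [dif_neg h]
  have hf_const : ∀ a b : Fin n, H.Reachable a b → f a = f b := by
    intro a b hab
    rcases (reachIff a b).1 hab with rfl | ⟨ha, hb⟩
    · rfl
    · exact (hf_ins a ha).trans (hf_ins b hb).symm
  let φ : H.ConnectedComponent → ↥(Cᶜ) :=
    SimpleGraph.ConnectedComponent.lift f (fun a b p _ => hf_const a b ⟨p⟩)
  have hφmk : ∀ x : Fin n, φ (H.connectedComponentMk x) = f x := fun _ => rfl
  have hcompf : ∀ x : Fin n, H.connectedComponentMk ((f x) : Fin n) =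
      H.connectedComponentMk x := by
    intro x
    by_cases hx : x ∈ C
    · have : f x = ⟨v, hvCc⟩ := hf_ins x (Set.mem_insert_of_mem _ hx)
      rw [this]
      exact SimpleGraph.ConnectedComponent.sound (reachV x hx).symm
    · rw [hf_not x hx]
  have hφcomp : ∀ i : H.ConnectedComponent,
      H.connectedComponentMk ((φ i) : Fin n) = i := by
    intro i
    induction i using SimpleGraph.ConnectedComponent.ind with
    | _ x => rw [hφmk]; exact hcompf x
  -- the equivalence on vertices
  let e : H.ConnectedComponent ≃ ↥(Cᶜ) :=
    { toFun := φ
      invFun := fun x => H.connectedComponentMk x.val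
      left_inv := hφcomp
      right_inv := by
        intro x
        rw [hφmk, hf_not x.val x.property] }
  -- adjacency transfer
  have hAdjIff : ∀ i j : H.ConnectedComponent,
      (G.induce Cᶜ).Adj (e i) (e j) ↔ (contractionE G Ecs).Adj i j := by
    intro i j
    constructor
    · intro h
      have hadj : G.Adj ((φ i) : Fin n) ((φ j) : Fin n) := h
      refine ⟨?_, ((φ i) : Fin n), ((φ j) : Fin n), hφcomp i, hφcomp j, hadj⟩
      intro hij
      exact hadj.ne (by rw [hij])
    · rintro ⟨hij, a, b, ha, hb, hab⟩
      have haC : a ∉ C := by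
        intro haC
        apply hij
        rw [← ha, ← hb]
        exact SimpleGraph.ConnectedComponent.sound ((reachIff a b).2
          (Or.inr ⟨Set.mem_insert_of_mem _ haC, factA a haC b hab⟩))
      have hbC : b ∉ C := by
        intro hbC
        apply hij
        rw [← ha, ← hb]
        exact SimpleGraph.ConnectedComponent.sound ((reachIff a b).2
          (Or.inr ⟨factA b hbC a hab.symm, Set.mem_insert_of_mem _ hbC⟩))
      have hei : e i = ⟨a, haC⟩ := by
        rw [← ha]
        show f a = _
        exact hf_not a haC
      have hej : e j = ⟨b, hbC⟩ := by
        rw [← hb]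
        show f b = _
        exact hf_not b hbC
      show G.Adj ((e i) : Fin n) ((e j) : Fin n)
      rw [hei, hej]
      exact hab
  let iso : contractionE G Ecs ≃g G.induce Cᶜ := ⟨e, fun {i j} => hAdjIff i j⟩
  refine ⟨⟨iso⟩, ?_⟩
  -- edge counts
  have hcard1 : Nat.card (contractionE G Ecs).edgeSet =
      Nat.card (G.induce Cᶜ).edgeSet := Nat.card_congr iso.mapEdgeSet
  rw [hcard1]
  -- bijection between G.edgeSet \ Ecs and the induced edge set
  have himg : Sym2.map (Subtype.val : ↥(Cᶜ) → Fin n) '' (G.induce Cᶜ).edgeSet =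
      G.edgeSet \ Ecs := by
    ext eedge
    constructor
    · rintro ⟨e', he', rfl⟩
      induction e' with
      | _ a b =>
        have hab : G.Adj (a : Fin n) (b : Fin n) := he'
        refine ⟨hab, ?_⟩
        rintro ⟨-, hmem⟩
        have ha : (a : Fin n) ∈ insert v C := hmem _ (by simp)
        have hb : (b : Fin n) ∈ insert v C := hmem _ (by simp)
        have ha' : (a : Fin n) = v := by
          rcases ha with h | h
          · exact h
          · exact absurd h a.property
        have hb' : (b : Fin n) = v := by
          rcases hb with h | h
          · exact h
          · exact absurd h b.property
        exact hab.ne (ha'.trans hb'.symm)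
    · rintro ⟨hedge, hnot⟩
      induction eedge with
      | _ a b =>
        have hab : G.Adj a b := hedge
        have haC : a ∉ C := by
          intro haC
          exact hnot ⟨hedge, by
            intro x hx
            rcases Sym2.mem_iff.1 hx with rfl | rfl
            · exact Set.mem_insert_of_mem _ haC
            · exact factA a haC x hab⟩
        have hbC : b ∉ C := by
          intro hbC
          exact hnot ⟨hedge, by
            intro x hx
            rcases Sym2.mem_iff.1 hx with rfl | rfl
            · exact factA b hbC x hab.symm
            · exact Set.mem_insert_of_mem _ hbC⟩
        refine ⟨s(⟨a, haC⟩, ⟨b, hbC⟩), ?_, rfl⟩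
        exact hab
  have hinj : Function.Injective (Sym2.map (Subtype.val : ↥(Cᶜ) → Fin n)) :=
    Sym2.map.injective Subtype.val_injective
  calc Nat.card (G.edgeSet \ Ecs : Set (Sym2 (Fin n)))
      = (G.edgeSet \ Ecs : Set (Sym2 (Fin n))).ncard := Nat.card_coe_set_eq _
    _ = (Sym2.map (Subtype.val : ↥(Cᶜ) → Fin n) '' (G.induce Cᶜ).edgeSet).ncard := by
        rw [himg]
    _ = (G.induce Cᶜ).edgeSet.ncard := Set.ncard_image_of_injective _ hinj
    _ = Nat.card (G.induce Cᶜ).edgeSet := (Nat.card_coe_set_eq _).symm
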